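/- arXiv:0901.4547 — 4 statements merged into one kernel-verified Lean document; each statement's English description precedes it below -/
import Mathlib

section
/- If A is a real normal n×n matrix all of whose complex eigenvalues have non-positive real part, then A + Aᵀ is negative semidefinite, and hence ‖exp(tA)x‖ is non-increasing in t for every x ∈ ℝⁿ. -/
open Matrix Polynomial
open scoped ComplexOrder

private lemma star_mulVec_comm {n : ℕ} (A : Matrix (Fin n) (Fin n) ℝ) (w : Fin n → ℂ) :
    (A.map (Complex.ofReal ·)) *ᵥ (star w) = star ((A.map (Complex.ofReal ·)) *ᵥ w) := by
  funext i
  simp only [mulVec, dotProduct, Pi.star_apply, map_apply]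
  rw [star_sum]
  congr 1
  funext j
  rw [star_mul']
  simp [Complex.conj_ofReal]

/-- Every real eigenvalue of `A + Aᵀ` is nonpositive. -/
private lemma eig_le {n : ℕ} (A : Matrix (Fin n) (Fin n) ℝ)
    (hnormal : A * Aᵀ = Aᵀ * A)
    (hspec : ∀ μ ∈ (A.map (Complex.ofReal ·)).charpoly.roots, μ.re ≤ 0)
    {lam : ℝ} {v : Fin n → ℝ} (hv : v ≠ 0) (hEig : (A + Aᵀ) *ᵥ v = lam • v) :
    lam ≤ 0 := by
  classical
  set Ac : Matrix (Fin n) (Fin n) ℂ := A.map (Complex.ofReal ·) with hAc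
  set Sc : Matrix (Fin n) (Fin n) ℂ := Ac + Acᵀ with hSc
  have hAcT : Acᵀ = Aᵀ.map (Complex.ofReal ·) := by
    rw [hAc, Matrix.transpose_map]
  have h2 : Ac * Acᵀ = Acᵀ * Ac := by
    ext i j
    have h := congrFun (congrFun hnormal i) j
    simp only [Matrix.mul_apply, Matrix.transpose_apply] at h
    simp only [Matrix.mul_apply, Matrix.transpose_apply, hAc, Matrix.map_apply]
    exact_mod_cast congrArg Complex.ofReal h
  have hcomm : Ac * Sc = Sc * Ac := by
    rw [hSc, Matrix.mul_add, Matrix.add_mul, h2]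
  -- complexified eigenvector of Sc
  have hvc : Sc *ᵥ (fun i => (v i : ℂ)) = (lam : ℂ) • (fun i => (v i : ℂ)) := by
    funext i
    have h := congrFun hEig i
    simp only [mulVec, dotProduct, Pi.smul_apply, smul_eq_mul, Matrix.add_apply,
      Matrix.transpose_apply] at h
    simp only [hSc, hAc, mulVec, dotProduct, Matrix.add_apply, Matrix.transpose_apply,
      Matrix.map_apply, Pi.smul_apply, smul_eq_mul]
    exact_mod_cast congrArg Complex.ofReal h
  set W := Module.End.eigenspace (Matrix.mulVecLin Sc) (lam : ℂ) with hW
  have hvW : (fun i => (v i : ℂ)) ∈ W := by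
    rw [hW, Module.End.mem_eigenspace_iff, Matrix.mulVecLin_apply]
    exact hvc
  have hvcne : (fun i => (v i : ℂ)) ≠ 0 := by
    intro h
    apply hv
    funext i
    have := congrFun h i
    simpa using this
  haveI : Nontrivial W := nontrivial_of_ne ⟨_, hvW⟩ 0 (by
    simp only [ne_eq, Submodule.mk_eq_zero]
    exact hvcne)
  have hinv : ∀ w ∈ W, (Matrix.mulVecLin Ac) w ∈ W := by
    intro w hw
    rw [hW, Module.End.mem_eigenspace_iff, Matrix.mulVecLin_apply] at hw ⊢
    rw [Matrix.mulVecLin_apply, Matrix.mulVec_mulVec, ← hcomm, ← Matrix.mulVec_mulVec, hw,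
      Matrix.mulVec_smul]
  let g : W →ₗ[ℂ] W := (Matrix.mulVecLin Ac).restrict hinv
  obtain ⟨μ, hμ⟩ := Module.End.exists_eigenvalue g
  obtain ⟨w0, hw0⟩ := hμ.exists_hasEigenvector
  set w : Fin n → ℂ := (w0 : Fin n → ℂ) with hw
  have hwne : w ≠ 0 := by
    intro h
    exact hw0.2 (by exact_mod_cast Subtype.ext h)
  have hAw : Ac *ᵥ w = μ • w := by
    have h := hw0.apply_eq_smul
    have := congrArg (Subtype.val : W → (Fin n → ℂ)) h
    simpa [g, LinearMap.restrict_apply, Matrix.mulVecLin_apply] using this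
  have hSw : Sc *ᵥ w = (lam : ℂ) • w := by
    have h := Module.End.mem_eigenspace_iff.mp w0.2
    rwa [Matrix.mulVecLin_apply] at h
  -- μ is a root of the charpoly of Ac
  have hdet : ((μ • (1 : Matrix (Fin n) (Fin n) ℂ)) - Ac).det = 0 := by
    rw [← Matrix.exists_mulVec_eq_zero_iff]
    refine ⟨w, hwne, ?_⟩
    rw [Matrix.sub_mulVec, Matrix.smul_mulVec, Matrix.one_mulVec, hAw, sub_self]
  have hroot : Ac.charpoly.IsRoot μ := by
    have heval : Ac.charpoly.eval μ = ((μ • (1 : Matrix (Fin n) (Fin n) ℂ)) - Ac).det := by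
      rw [Matrix.charpoly, ← Polynomial.coe_evalRingHom, RingHom.map_det]
      congr 1
      ext i j
      by_cases h : i = j
      · subst h
        simp [Matrix.charmatrix_apply_eq, Matrix.one_apply]
      · simp [Matrix.charmatrix_apply_ne _ _ _ h, Matrix.one_apply, h]
    rw [Polynomial.IsRoot, heval, hdet]
  have hre : μ.re ≤ 0 :=
    hspec μ (Polynomial.mem_roots'.mpr ⟨Ac.charpoly_monic.ne_zero, hroot⟩)
  -- the conjugation identity
  have hATw : Acᵀ *ᵥ w = ((lam : ℂ) - μ) • w := by
    have h : Ac *ᵥ w + Acᵀ *ᵥ w = (lam : ℂ) • w := by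
      rw [← Matrix.add_mulVec, ← hSc]; exact hSw
    rw [hAw] at h
    have := sub_eq_of_eq_add' h.symm
    rw [← this, sub_smul]
  have hd : star w ⬝ᵥ w ≠ 0 := fun h => hwne (dotProduct_star_self_eq_zero.mp h)
  have h1 : star w ⬝ᵥ (Acᵀ *ᵥ w) = ((lam : ℂ) - μ) * (star w ⬝ᵥ w) := by
    rw [hATw, dotProduct_smul, smul_eq_mul]
  have h2 : star w ⬝ᵥ (Acᵀ *ᵥ w) = (starRingEnd ℂ μ) * (star w ⬝ᵥ w) := by
    rw [Matrix.dotProduct_mulVec, Matrix.vecMul_transpose, star_mulVec_comm, ← hAc, hAw,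
      star_smul, smul_dotProduct]
    simp [smul_eq_mul]
  have hmain : (lam : ℂ) - μ = starRingEnd ℂ μ := mul_right_cancel₀ hd (h1.symm.trans h2)
  have hlam : lam = μ.re + μ.re := by
    have h := congrArg Complex.re (sub_eq_iff_eq_add.mp hmain)
    simpa [Complex.add_re, Complex.conj_re] using h
  linarith

/-- If `A` is a real normal matrix whose complex eigenvalues all have non-positive
real part, then `A + Aᵀ` is negative semidefinite and `‖exp(tA)x‖` is
non-increasing in `t` for every `x`. -/
theorem normal_nonpos_spectrum_contractive (n : ℕ) (A : Matrix (Fin n) (Fin n) ℝ)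
    (hnormal : A * Aᵀ = Aᵀ * A)
    (hspec : ∀ μ ∈ (A.map (Complex.ofReal ·)).charpoly.roots, μ.re ≤ 0) :
    (∀ x : Fin n → ℝ, x ⬝ᵥ ((A + Aᵀ).mulVec x) ≤ 0) ∧
    (∀ x : Fin n → ℝ, Antitone fun t : ℝ =>
        Real.sqrt (((NormedSpace.exp (t • A)).mulVec x) ⬝ᵥ
          ((NormedSpace.exp (t • A)).mulVec x))) := by
  classical
  have hherm : (-(A + Aᵀ)).IsHermitian := by
    ext i j
    simp [Matrix.conjTranspose_apply, Matrix.add_apply, Matrix.transpose_apply, add_comm]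
  have hpsd : (-(A + Aᵀ)).PosSemidef := by
    apply hherm.posSemidef_iff_eigenvalues_nonneg.mpr
    intro i
    have hb := hherm.mulVec_eigenvectorBasis i
    have hbne : (⇑(hherm.eigenvectorBasis i) : Fin n → ℝ) ≠ 0 := by
      intro h
      exact (hherm.eigenvectorBasis.toBasis.ne_zero i)
        (by rw [OrthonormalBasis.coe_toBasis]; simpa using h)
    have hEig : (A + Aᵀ) *ᵥ ⇑(hherm.eigenvectorBasis i)
        = (-(hherm.eigenvalues i)) • ⇑(hherm.eigenvectorBasis i) := by
      rw [Matrix.neg_mulVec] at hb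
      rw [neg_smul, ← hb, neg_neg]
    have := eig_le A hnormal hspec hbne hEig
    simp only [Pi.zero_apply]
    linarith
  have key : ∀ x : Fin n → ℝ, x ⬝ᵥ ((A + Aᵀ) *ᵥ x) ≤ 0 := by
    intro x
    have h := hpsd.dotProduct_mulVec_nonneg x
    rw [Matrix.neg_mulVec, dotProduct_neg, star_trivial] at h
    linarith
  refine ⟨key, fun x => ?_⟩
  letI : NormedRing (Matrix (Fin n) (Fin n) ℝ) := Matrix.linftyOpNormedRing
  letI : NormedAlgebra ℝ (Matrix (Fin n) (Fin n) ℝ) := Matrix.linftyOpNormedAlgebra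
  letI : CompleteSpace (Matrix (Fin n) (Fin n) ℝ) := FiniteDimensional.complete ℝ _
  set y : ℝ → (Fin n → ℝ) := fun t => (NormedSpace.exp (t • A)) *ᵥ x with hy
  let L : Matrix (Fin n) (Fin n) ℝ →ₗ[ℝ] (Fin n → ℝ) :=
    { toFun := fun B => B *ᵥ x
      map_add' := fun B C => Matrix.add_mulVec B C x
      map_smul' := fun c B => Matrix.smul_mulVec c B x }
  have hyderiv : ∀ t, HasDerivAt y (A *ᵥ y t) t := by
    intro t
    have hM : HasDerivAt (fun u : ℝ => NormedSpace.exp (u • A))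
        (A * NormedSpace.exp (t • A)) t := hasDerivAt_exp_smul_const' A t
    have hcomp := (LinearMap.toContinuousLinearMap L).hasFDerivAt.comp_hasDerivAt t hM
    have heq : (LinearMap.toContinuousLinearMap L) (A * NormedSpace.exp (t • A))
        = A *ᵥ y t := by
      show (A * NormedSpace.exp (t • A)) *ᵥ x = A *ᵥ y t
      rw [← Matrix.mulVec_mulVec]
    rw [← heq]
    exact hcomp
  have hg : ∀ t, HasDerivAt (fun s => y s ⬝ᵥ y s)
      ((A *ᵥ y t) ⬝ᵥ y t + y t ⬝ᵥ (A *ᵥ y t)) t := by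
    intro t
    have h1 : ∀ i : Fin n, HasDerivAt (fun s => y s i) ((A *ᵥ y t) i) t := fun i =>
      (ContinuousLinearMap.proj i : (Fin n → ℝ) →L[ℝ] ℝ).hasFDerivAt.comp_hasDerivAt t
        (hyderiv t)
    have hsum := HasDerivAt.fun_sum (fun i (_ : i ∈ Finset.univ) => (h1 i).mul (h1 i))
    convert hsum using 1
    · rfl
    · rfl
    all_goals simp [dotProduct, Finset.sum_add_distrib, mul_comm]
  have hderiv_nonpos : ∀ t, deriv (fun s => y s ⬝ᵥ y s) t ≤ 0 := by
    intro t
    rw [(hg t).deriv]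
    have h1 : ∀ z : Fin n → ℝ, (A *ᵥ z) ⬝ᵥ z = z ⬝ᵥ (Aᵀ *ᵥ z) := by
      intro z
      rw [Matrix.dotProduct_mulVec, Matrix.vecMul_transpose]
    have h2 : ∀ z : Fin n → ℝ, z ⬝ᵥ (Aᵀ *ᵥ z) + z ⬝ᵥ (A *ᵥ z) = z ⬝ᵥ ((A + Aᵀ) *ᵥ z) := by
      intro z
      rw [Matrix.add_mulVec, dotProduct_add, add_comm]
    have := key (y t)
    rw [h1 (y t), h2 (y t)]
    exact this
  have hanti : Antitone (fun s => y s ⬝ᵥ y s) :=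
    antitone_of_deriv_nonpos (fun t => (hg t).differentiableAt) hderiv_nonpos
  exact fun a b hab => Real.sqrt_le_sqrt (hanti hab)
end

section
/- If a flow t ↦ exp(tA)x + (particular solution) generated by the affine ODE r'(t) = A r(t) + c on ℝⁿ leaves a compact set with nonempty interior invariant for all t ≥ 0, then every eigenvalue of A has non-positive real part. -/
open Matrix Polynomial NormedSpace


lemma exists_eigvec {n : ℕ} (M : Matrix (Fin n) (Fin n) ℂ) (μ : ℂ)
    (h : μ ∈ M.charpoly.roots) : ∃ v ≠ 0, M.mulVec v = μ • v := by
  have h0 : M.charpoly.eval μ = 0 := (Polynomial.isRoot_of_mem_roots h)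
  have hdet : (Matrix.diagonal (fun _ : Fin n => μ) - M).det = 0 := by
    have : ((Polynomial.evalRingHom μ).mapMatrix (charmatrix M)).det = 0 := by
      rw [← RingHom.map_det]; exact h0
    rw [← this]
    congr 1
    ext i j
    by_cases hij : i = j
    · subst hij; simp [charmatrix_apply_eq]
    · simp [charmatrix_apply_ne _ _ _ hij, Matrix.diagonal_apply_ne _ hij]
  obtain ⟨v, hv, hv0⟩ := (Matrix.exists_mulVec_eq_zero_iff).2 hdet
  refine ⟨v, hv, ?_⟩
  have h1 := sub_mulVec (Matrix.diagonal (fun _ : Fin n => μ)) M v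
  rw [hv0] at h1
  have h2 : (Matrix.diagonal (fun _ : Fin n => μ)).mulVec v = μ • v := by
    simp [← Matrix.smul_one_eq_diagonal, smul_mulVec]
  rw [eq_comm, sub_eq_zero] at h1
  rw [← h1, h2]

lemma hasDerivAt_cexp_mul (μ : ℂ) (t : ℝ) :
    HasDerivAt (fun s : ℝ => Complex.exp (s * μ)) (μ * Complex.exp (t * μ)) t := by
  have h1 : HasDerivAt (fun z : ℂ => Complex.exp (z * μ)) (μ * Complex.exp (t * μ)) (t : ℂ) := by
    simpa [mul_comm, Function.comp_def] using ((Complex.hasDerivAt_exp _).comp (t:ℂ) ((hasDerivAt_id (t:ℂ)).mul_const μ))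
  simpa using h1.comp_ofReal

lemma hasDerivAt_eig {n : ℕ} (A : Matrix (Fin n) (Fin n) ℝ) (μ : ℂ) (v : Fin n → ℂ)
    (hv : (A.map (Complex.ofReal ·)).mulVec v = μ • v) (φ : ℂ →L[ℝ] ℝ) (t : ℝ) :
    HasDerivAt (fun s : ℝ => fun j => φ (Complex.exp (s*μ) * v j))
      (A.mulVec (fun j => φ (Complex.exp (t*μ) * v j))) t := by
  rw [hasDerivAt_pi]
  intro j
  have h1 : HasDerivAt (fun s : ℝ => Complex.exp (s*μ) * v j) (μ * Complex.exp (t*μ) * v j) t :=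
    (hasDerivAt_cexp_mul μ t).mul_const _
  have h2 : HasDerivAt (fun s : ℝ => φ (Complex.exp (s*μ) * v j))
      (φ (μ * Complex.exp (t*μ) * v j)) t := by
    simpa [Function.comp_def] using (φ.hasFDerivAt.comp t h1.hasFDerivAt).hasDerivAt
  have key : μ * Complex.exp (t*μ) * v j
      = ∑ k, ((A j k : ℂ)) * (Complex.exp (t*μ) * v k) := by
    have hμv : μ * v j = ∑ k, (A j k : ℂ) * v k := by
      have := congrFun hv j
      simp only [Matrix.mulVec, dotProduct, Matrix.map_apply, Pi.smul_apply,
        smul_eq_mul] at this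
      rw [← this]
    calc μ * Complex.exp (t*μ) * v j = Complex.exp (t*μ) * (μ * v j) := by ring
      _ = Complex.exp (t*μ) * ∑ k, (A j k : ℂ) * v k := by rw [hμv]
      _ = ∑ k, ((A j k : ℂ)) * (Complex.exp (t*μ) * v k) := by
          rw [Finset.mul_sum]; apply Finset.sum_congr rfl; intros; ring
  have hval : φ (μ * Complex.exp (t*μ) * v j)
      = A.mulVec (fun k => φ (Complex.exp (t*μ) * v k)) j := by
    rw [key, map_sum]
    simp only [Matrix.mulVec, dotProduct]
    apply Finset.sum_congr rfl
    intro k _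
    rw [show ((A j k : ℂ)) * (Complex.exp (t*μ) * v k) = (A j k) • (Complex.exp (t*μ) * v k) from
      (Complex.real_smul).symm, φ.map_smul]
    simp
  rw [hval] at h2
  exact h2

lemma exists_base_sol {n : ℕ} (A : Matrix (Fin n) (Fin n) ℝ) (c : Fin n → ℝ) (x0 : Fin n → ℝ) :
    ∃ r : ℝ → (Fin n → ℝ), r 0 = x0 ∧ ∀ t, HasDerivAt r (A.mulVec (r t) + c) t := by
  letI : NormedAlgebra ℚ ((Fin n → ℝ) →L[ℝ] (Fin n → ℝ)) := NormedAlgebra.restrictScalars ℚ ℝ _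
  set T : (Fin n → ℝ) →L[ℝ] (Fin n → ℝ) := LinearMap.toContinuousLinearMap (Matrix.mulVecLin A)
    with hTdef
  have hT : ∀ x, T x = A.mulVec x := fun x => rfl
  set g : ℝ → (Fin n → ℝ) := fun s => (NormedSpace.exp (-(s • T))) c with hg
  have hgcont : Continuous g := by
    have h1 : Continuous fun s : ℝ => NormedSpace.exp (-(s • T)) :=
      NormedSpace.exp_continuous.comp ((continuous_id.smul continuous_const).neg)
    exact (ContinuousLinearMap.apply ℝ (Fin n → ℝ) c).continuous.comp h1
  set h : ℝ → (Fin n → ℝ) := fun t => ∫ s in (0:ℝ)..t, g s with hh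
  refine ⟨fun t => (NormedSpace.exp (t • T)) (x0 + h t), ?_, ?_⟩
  · simp [hh, exp_zero]
  · intro t
    have hE : HasDerivAt (fun u : ℝ => NormedSpace.exp (u • T)) (T * NormedSpace.exp (t • T)) t :=
      hasDerivAt_exp_smul_const' T t
    have hh' : HasDerivAt h (g t) t := (hgcont.integral_hasStrictDerivAt 0 t).hasDerivAt
    have hx : HasDerivAt (fun u => x0 + h u) (g t) t := (hh'.const_add x0)
    have key := hE.clm_apply hx
    convert key using 1
    case e'_4 => rfl
    case e'_5 => rfl
    case e'_6 => rfl
    have hinv : (NormedSpace.exp (t • T)) ((NormedSpace.exp (-(t • T))) c) = c := by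
      have h2 : NormedSpace.exp (t • T) * NormedSpace.exp (-(t • T)) = 1 := by
        rw [← NormedSpace.exp_add_of_commute ((Commute.refl (t • T)).neg_right)]; simp [exp_zero]
      calc (NormedSpace.exp (t • T)) ((NormedSpace.exp (-(t • T))) c)
          = (NormedSpace.exp (t • T) * NormedSpace.exp (-(t • T))) c := rfl
        _ = c := by rw [h2]; rfl
    rw [show ((T * NormedSpace.exp (t • T)) (x0 + h t)) = T ((NormedSpace.exp (t • T)) (x0 + h t)) from rfl]
    rw [hT, hg]
    simp only
    rw [hinv]



/-- If every solution of the affine ODE `r' = A r + c` starting in a compact set `K`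
with nonempty interior remains in `K` for all `t ≥ 0`, then every (complex)
eigenvalue of `A` has non-positive real part. -/
theorem invariant_compact_implies_stable (n : ℕ) (A : Matrix (Fin n) (Fin n) ℝ)
    (c : Fin n → ℝ) (K : Set (Fin n → ℝ)) (hK : IsCompact K)
    (hint : (interior K).Nonempty)
    (hinv : ∀ r : ℝ → (Fin n → ℝ),
      (∀ t : ℝ, HasDerivAt r (A.mulVec (r t) + c) t) →
      r 0 ∈ K → ∀ t : ℝ, 0 ≤ t → r t ∈ K) :
    ∀ μ ∈ (A.map (Complex.ofReal ·)).charpoly.roots, μ.re ≤ 0 := by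
  intro μ hμ
  by_contra hpos
  push_neg at hpos
  obtain ⟨v, hv0, hv⟩ := exists_eigvec (A.map (Complex.ofReal ·)) μ hμ
  -- interior point and ball
  obtain ⟨x0, hx0⟩ := hint
  obtain ⟨ε, hε, hball⟩ := Metric.isOpen_iff.1 isOpen_interior x0 hx0
  have hballK : Metric.ball x0 ε ⊆ K := hball.trans interior_subset
  -- base solution
  obtain ⟨r0, hr00, hr0d⟩ := exists_base_sol A c x0
  -- bound on K
  obtain ⟨M, hM⟩ := hK.isBounded.exists_norm_le
  -- the two oscillating solutions
  set u : (ℂ →L[ℝ] ℝ) → ℝ → (Fin n → ℝ) :=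
    fun φ t => fun j => φ (Complex.exp (t*μ) * v j) with hu
  set S : ℝ := ‖u Complex.reCLM 0‖ + ‖u Complex.imCLM 0‖ + 1 with hS
  have hSpos : 0 < S := by positivity
  set δ : ℝ := ε / (2 * S) with hδ
  have hδpos : 0 < δ := by positivity
  -- perturbed solutions stay in K
  have hstay : ∀ φ : ℂ →L[ℝ] ℝ, ‖u φ 0‖ ≤ S - 1 → ∀ t : ℝ, 0 ≤ t →
      r0 t + δ • u φ t ∈ K := by
    intro φ hφS
    apply hinv
    · intro t
      have h1 := (hr0d t).add ((hasDerivAt_eig A μ v hv φ t).const_smul δ)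
      convert h1 using 1
      case e'_4 => rfl
      case e'_5 => rfl
      case e'_6 => rfl
      case e'_8 => rfl
      rw [Matrix.mulVec_add, Matrix.mulVec_smul]
      abel
    · apply hballK
      rw [hr00]
      simp only [Metric.mem_ball, dist_eq_norm, add_sub_cancel_left]
      rw [norm_smul, Real.norm_eq_abs, abs_of_pos hδpos]
      calc δ * ‖u φ 0‖ ≤ δ * S := by
            apply mul_le_mul_of_nonneg_left _ hδpos.le
            linarith
        _ = ε / 2 := by rw [hδ]; field_simp
        _ < ε := by linarith
  -- r0 stays in K
  have hr0K : ∀ t : ℝ, 0 ≤ t → r0 t ∈ K := by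
    apply hinv r0 hr0d
    rw [hr00]; exact interior_subset hx0
  -- hence u φ is bounded for t ≥ 0
  have hub : ∀ φ : ℂ →L[ℝ] ℝ, ‖u φ 0‖ ≤ S - 1 → ∀ t : ℝ, 0 ≤ t →
      ‖u φ t‖ ≤ 2 * M / δ := by
    intro φ hφS t ht
    have h1 : ‖δ • u φ t‖ ≤ 2 * M := by
      have : δ • u φ t = (r0 t + δ • u φ t) - r0 t := by abel
      rw [this]
      calc ‖(r0 t + δ • u φ t) - r0 t‖ ≤ ‖r0 t + δ • u φ t‖ + ‖r0 t‖ := norm_sub_le _ _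
        _ ≤ M + M := add_le_add (hM _ (hstay φ hφS t ht)) (hM _ (hr0K t ht))
        _ = 2 * M := by ring
    rw [norm_smul, Real.norm_eq_abs, abs_of_pos hδpos] at h1
    rw [div_eq_inv_mul, ← mul_le_mul_iff_of_pos_left hδpos, ← mul_assoc, mul_inv_cancel₀ hδpos.ne', one_mul]
    linarith [h1]
  have hre : ‖u Complex.reCLM 0‖ ≤ S - 1 := by rw [hS]; have := norm_nonneg (u Complex.imCLM 0); linarith
  have him : ‖u Complex.imCLM 0‖ ≤ S - 1 := by rw [hS]; have := norm_nonneg (u Complex.reCLM 0); linarith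
  -- pick a nonzero coordinate
  obtain ⟨j, hj⟩ : ∃ j, v j ≠ 0 := Function.ne_iff.1 hv0
  have hvj : 0 < ‖v j‖ := by simpa using hj
  -- exponential bound
  have hexp : ∀ t : ℝ, 0 ≤ t → Real.exp (t * μ.re) * ‖v j‖ ≤ 4 * M / δ := by
    intro t ht
    have h1 : Real.exp (t * μ.re) * ‖v j‖
        = ‖Complex.exp (t*μ) * v j‖ := by
      rw [norm_mul, Complex.norm_exp]
      congr 2
      simp [Complex.mul_re]
    rw [h1]
    calc ‖Complex.exp (t*μ) * v j‖
        ≤ |(Complex.exp (t*μ) * v j).re| + |(Complex.exp (t*μ) * v j).im| :=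
          Complex.norm_le_abs_re_add_abs_im _
      _ ≤ ‖u Complex.reCLM t‖ + ‖u Complex.imCLM t‖ := by
          apply add_le_add
          · simpa [hu] using norm_le_pi_norm (u Complex.reCLM t) j
          · simpa [hu] using norm_le_pi_norm (u Complex.imCLM t) j
      _ ≤ 2 * M / δ + 2 * M / δ :=
          add_le_add (hub _ hre t ht) (hub _ him t ht)
      _ = 4 * M / δ := by ring
  -- contradiction: exp grows
  set C : ℝ := (4 * M / δ) / ‖v j‖ with hC
  have hCbound : ∀ t : ℝ, 0 ≤ t → Real.exp (t * μ.re) ≤ C := by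
    intro t ht
    rw [hC, le_div_iff₀ hvj]
    exact hexp t ht
  have hC0 : 1 ≤ C := by simpa using hCbound 0 le_rfl
  have htpos : 0 ≤ C / μ.re := div_nonneg (by linarith) hpos.le
  have h2 := hCbound (C / μ.re) htpos
  have h3 : C / μ.re * μ.re + 1 ≤ Real.exp (C / μ.re * μ.re) := Real.add_one_le_exp _
  rw [div_mul_cancel₀ _ hpos.ne'] at h3 h2
  linarith
end

section
/- Define the superoperator matrix A_V with entries a_{ℓj} = Tr(V†σ_ℓ V σ_j) − (1/2)Tr(V†V{σ_ℓ,σ_j}) with respect to an orthonormal basis {σ_j} of traceless Hermitian N×N matrices. If V is normal ([V,V†]=0), then A_V is a normal matrix: A_V A_Vᵀ = A_Vᵀ A_V. -/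
open Matrix

namespace BlochAux

variable {N m : ℕ}

noncomputable def L (V X : Matrix (Fin N) (Fin N) ℂ) : Matrix (Fin N) (Fin N) ℂ :=
  V * X * Vᴴ - (1/2 : ℂ) • (Vᴴ * V * X + X * (Vᴴ * V))

noncomputable def L' (V X : Matrix (Fin N) (Fin N) ℂ) : Matrix (Fin N) (Fin N) ℂ :=
  Vᴴ * X * V - (1/2 : ℂ) • (Vᴴ * V * X + X * (Vᴴ * V))

lemma adj1 (V X Z : Matrix (Fin N) (Fin N) ℂ) : (L' V X * Z).trace = (X * L V Z).trace := by
  simp only [L, L', sub_mul, mul_sub, Matrix.smul_mul, Matrix.mul_smul, add_mul, mul_add,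
    trace_sub, trace_smul, trace_add]
  rw [show Vᴴ * X * V * Z = Vᴴ * (X * V * Z) by noncomm_ring,
    Matrix.trace_mul_comm (Vᴴ) (X * V * Z),
    show X * V * Z * Vᴴ = X * (V * Z * Vᴴ) by noncomm_ring,
    show Vᴴ * V * X * Z = (Vᴴ * V) * (X * Z) by noncomm_ring,
    Matrix.trace_mul_comm (Vᴴ * V) (X * Z),
    show X * Z * (Vᴴ * V) = X * (Z * (Vᴴ * V)) by noncomm_ring,
    show X * (Vᴴ * V) * Z = X * (Vᴴ * V * Z) by noncomm_ring,
    add_comm ((X * (Z * (Vᴴ * V))).trace)]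

lemma adj2 (V X Z : Matrix (Fin N) (Fin N) ℂ) : (X * L' V Z).trace = (L V X * Z).trace := by
  simp only [L, L', sub_mul, mul_sub, Matrix.smul_mul, Matrix.mul_smul, add_mul, mul_add,
    trace_sub, trace_smul, trace_add]
  rw [show X * (Vᴴ * Z * V) = X * (Vᴴ * Z) * V by noncomm_ring,
    Matrix.trace_mul_comm (X * (Vᴴ * Z)) V,
    show V * (X * (Vᴴ * Z)) = V * X * Vᴴ * Z by noncomm_ring,
    show X * (Vᴴ * V * Z) = (X * (Vᴴ * V)) * Z by noncomm_ring,
    Matrix.trace_mul_comm (X * (Vᴴ * V)) Z,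
    Matrix.trace_mul_comm (Z) (X * (Vᴴ * V)),
    show X * (Vᴴ * V) * Z = X * ((Vᴴ * V) * Z) by noncomm_ring,
    Matrix.trace_mul_comm X ((Vᴴ * V) * Z),
    show Vᴴ * V * Z * X = Vᴴ * V * (Z * X) by noncomm_ring,
    Matrix.trace_mul_comm (Vᴴ * V) (Z * X),
    show Z * X * (Vᴴ * V) = Z * (X * (Vᴴ * V)) by noncomm_ring,
    Matrix.trace_mul_comm Z (X * (Vᴴ * V)),
    show X * (Vᴴ * V) * Z = X * (Vᴴ * V * Z) by noncomm_ring,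
    show Vᴴ * V * X * Z = (Vᴴ * V) * (X * Z) by noncomm_ring,
    Matrix.trace_mul_comm (Vᴴ * V) (X * Z),
    show X * Z * (Vᴴ * V) = X * (Z * (Vᴴ * V)) by noncomm_ring,
    add_comm ((X * (Vᴴ * V * Z)).trace)]

lemma comm (V : Matrix (Fin N) (Fin N) ℂ) (hV : V * Vᴴ = Vᴴ * V)
    (Y : Matrix (Fin N) (Fin N) ℂ) : L V (L' V Y) = L' V (L V Y) := by
  have hVW : V * (Vᴴ * V) = (Vᴴ * V) * V := by
    rw [← Matrix.mul_assoc, hV]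
  have hWV : (Vᴴ * V) * Vᴴ = Vᴴ * (V * Vᴴ) := by rw [Matrix.mul_assoc]
  have m1 : V * (Vᴴ * Y * V) * Vᴴ = Vᴴ * (V * Y * Vᴴ) * V := by
    calc V * (Vᴴ * Y * V) * Vᴴ = (V * Vᴴ) * Y * (V * Vᴴ) := by simp only [Matrix.mul_assoc]
      _ = (Vᴴ * V) * Y * (Vᴴ * V) := by rw [hV]
      _ = Vᴴ * (V * Y * Vᴴ) * V := by simp only [Matrix.mul_assoc]
  have m2 : V * (Vᴴ * V * Y) * Vᴴ = (Vᴴ * V) * (V * Y * Vᴴ) := by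
    calc V * (Vᴴ * V * Y) * Vᴴ = (V * (Vᴴ * V)) * Y * Vᴴ := by simp only [Matrix.mul_assoc]
      _ = ((Vᴴ * V) * V) * Y * Vᴴ := by rw [hVW]
      _ = (Vᴴ * V) * (V * Y * Vᴴ) := by simp only [Matrix.mul_assoc]
  have m3 : V * (Y * (Vᴴ * V)) * Vᴴ = (V * Y * Vᴴ) * (Vᴴ * V) := by
    calc V * (Y * (Vᴴ * V)) * Vᴴ = V * Y * ((Vᴴ * V) * Vᴴ) := by simp only [Matrix.mul_assoc]
      _ = V * Y * (Vᴴ * (V * Vᴴ)) := by rw [hWV]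
      _ = V * Y * (Vᴴ * (Vᴴ * V)) := by rw [hV]
      _ = (V * Y * Vᴴ) * (Vᴴ * V) := by simp only [Matrix.mul_assoc]
  have m2' : Vᴴ * (Vᴴ * V * Y) * V = (Vᴴ * V) * (Vᴴ * Y * V) := by
    calc Vᴴ * (Vᴴ * V * Y) * V = (Vᴴ * (V * Vᴴ)) * Y * V := by
          rw [hV]; simp only [Matrix.mul_assoc]
      _ = ((Vᴴ * V) * Vᴴ) * Y * V := by rw [hWV]
      _ = (Vᴴ * V) * (Vᴴ * Y * V) := by simp only [Matrix.mul_assoc]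
  have m3' : Vᴴ * (Y * (Vᴴ * V)) * V = (Vᴴ * Y * V) * (Vᴴ * V) := by
    calc Vᴴ * (Y * (Vᴴ * V)) * V = Vᴴ * Y * ((Vᴴ * V) * V) := by simp only [Matrix.mul_assoc]
      _ = Vᴴ * Y * (V * (Vᴴ * V)) := by rw [hVW]
      _ = (Vᴴ * Y * V) * (Vᴴ * V) := by simp only [Matrix.mul_assoc]
  simp only [L, L', mul_sub, sub_mul, mul_add, add_mul, smul_add, smul_sub,
    Matrix.mul_smul, Matrix.smul_mul, smul_smul]
  rw [m1, m2, m3, m2', m3']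
  module

lemma L_herm (V X : Matrix (Fin N) (Fin N) ℂ) (hX : X.IsHermitian) : (L V X).IsHermitian := by
  unfold L Matrix.IsHermitian
  simp only [conjTranspose_sub, conjTranspose_smul, conjTranspose_add, conjTranspose_mul,
    conjTranspose_conjTranspose, hX.eq]
  rw [show star (1/2 : ℂ) = (1/2 : ℂ) by simp]
  rw [Matrix.mul_assoc, add_comm (X * (Vᴴ * V)), ← Matrix.mul_assoc]

lemma L'_herm (V X : Matrix (Fin N) (Fin N) ℂ) (hX : X.IsHermitian) : (L' V X).IsHermitian := by
  unfold L' Matrix.IsHermitian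
  simp only [conjTranspose_sub, conjTranspose_smul, conjTranspose_add, conjTranspose_mul,
    conjTranspose_conjTranspose, hX.eq]
  rw [show star (1/2 : ℂ) = (1/2 : ℂ) by simp]
  rw [Matrix.mul_assoc, add_comm (X * (Vᴴ * V)), ← Matrix.mul_assoc]

lemma L_trace (V X : Matrix (Fin N) (Fin N) ℂ) : (L V X).trace = 0 := by
  unfold L
  rw [trace_sub, trace_smul, trace_add, Matrix.trace_mul_comm (V * X) Vᴴ,
    Matrix.trace_mul_comm X (Vᴴ * V), ← Matrix.mul_assoc]
  simp only [smul_eq_mul]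
  ring

lemma L'_trace (V : Matrix (Fin N) (Fin N) ℂ) (hV : V * Vᴴ = Vᴴ * V)
    (X : Matrix (Fin N) (Fin N) ℂ) : (L' V X).trace = 0 := by
  unfold L'
  rw [trace_sub, trace_smul, trace_add, Matrix.trace_mul_comm (Vᴴ * X) V,
    Matrix.trace_mul_comm X (Vᴴ * V), ← Matrix.mul_assoc, hV]
  simp only [smul_eq_mul]
  ring

lemma coeff_right (σ : Fin m → Matrix (Fin N) (Fin N) ℂ)
    (honb : ∀ j k, (σ j * σ k).trace = if j = k then 1 else 0)
    (c : Fin m → ℝ) (j : Fin m) : ((∑ i, c i • σ i) * σ j).trace = (c j : ℂ) := by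
  rw [Finset.sum_mul, trace_sum]
  simp only [Matrix.smul_mul, trace_smul, honb]
  simp

lemma coeff_left (σ : Fin m → Matrix (Fin N) (Fin N) ℂ)
    (honb : ∀ j k, (σ j * σ k).trace = if j = k then 1 else 0)
    (c : Fin m → ℝ) (j : Fin m) : (σ j * ∑ i, c i • σ i).trace = (c j : ℂ) := by
  rw [Finset.mul_sum, trace_sum]
  simp only [Matrix.mul_smul, trace_smul, honb]
  simp

lemma trace_prod (σ : Fin m → Matrix (Fin N) (Fin N) ℂ)
    (honb : ∀ j k, (σ j * σ k).trace = if j = k then 1 else 0)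
    (c d : Fin m → ℝ) :
    ((∑ i, c i • σ i) * (∑ i, d i • σ i)).trace = ((∑ i, c i * d i : ℝ) : ℂ) := by
  rw [Finset.sum_mul, trace_sum]
  simp only [Matrix.smul_mul, trace_smul, coeff_left σ honb]
  push_cast
  simp [mul_comm]

lemma entry1 (V : Matrix (Fin N) (Fin N) ℂ) (σ : Fin m → Matrix (Fin N) (Fin N) ℂ) (ℓ j : Fin m) :
    (Vᴴ * σ ℓ * V * σ j).trace.re -
      (1 / 2 : ℝ) * (Vᴴ * V * (σ ℓ * σ j + σ j * σ ℓ)).trace.re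
    = (L' V (σ ℓ) * σ j).trace.re := by
  unfold L'
  simp only [sub_mul, Matrix.smul_mul, add_mul, mul_add, trace_sub, trace_smul, trace_add]
  rw [show σ ℓ * (Vᴴ * V) * σ j = σ ℓ * (Vᴴ * V * σ j) by noncomm_ring,
    Matrix.trace_mul_comm (σ ℓ) (Vᴴ * V * σ j),
    show Vᴴ * V * σ j * σ ℓ = Vᴴ * V * (σ j * σ ℓ) by noncomm_ring,
    show Vᴴ * V * σ ℓ * σ j = Vᴴ * V * (σ ℓ * σ j) by noncomm_ring]
  simp only [smul_eq_mul, Complex.sub_re, Complex.mul_re, Complex.add_re]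
  norm_num

lemma entry2 (V : Matrix (Fin N) (Fin N) ℂ) (σ : Fin m → Matrix (Fin N) (Fin N) ℂ) (ℓ j : Fin m) :
    (Vᴴ * σ ℓ * V * σ j).trace.re -
      (1 / 2 : ℝ) * (Vᴴ * V * (σ ℓ * σ j + σ j * σ ℓ)).trace.re
    = (σ ℓ * L V (σ j)).trace.re := by
  unfold L
  simp only [mul_sub, Matrix.mul_smul, mul_add, trace_sub, trace_smul, trace_add]
  rw [show Vᴴ * σ ℓ * V * σ j = Vᴴ * (σ ℓ * V * σ j) by noncomm_ring,
    Matrix.trace_mul_comm Vᴴ (σ ℓ * V * σ j),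
    show σ ℓ * V * σ j * Vᴴ = σ ℓ * (V * σ j * Vᴴ) by noncomm_ring,
    show σ ℓ * (Vᴴ * V * σ j) = σ ℓ * (Vᴴ * V) * σ j by noncomm_ring,
    Matrix.trace_mul_comm (σ ℓ * (Vᴴ * V)) (σ j),
    show σ j * (σ ℓ * (Vᴴ * V)) = σ j * σ ℓ * (Vᴴ * V) by noncomm_ring,
    Matrix.trace_mul_comm (σ j * σ ℓ) (Vᴴ * V),
    show σ ℓ * (σ j * (Vᴴ * V)) = σ ℓ * σ j * (Vᴴ * V) by noncomm_ring,
    Matrix.trace_mul_comm (σ ℓ * σ j) (Vᴴ * V)]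
  simp only [smul_eq_mul, Complex.sub_re, Complex.mul_re, Complex.add_re]
  norm_num
  ring

end BlochAux

/-- If `V` is normal, then the Bloch superoperator matrix `A_V` with entries
`a_{ℓj} = Tr(V†σ_ℓVσ_j) − (1/2)Tr(V†V{σ_ℓ,σ_j})` is a normal matrix. -/
theorem bloch_superoperator_normal_of_normal (N : ℕ)
    (σ : Fin (N ^ 2 - 1) → Matrix (Fin N) (Fin N) ℂ)
    (hherm : ∀ j, (σ j).IsHermitian) (htraceless : ∀ j, (σ j).trace = 0)
    (honb : ∀ j k, (σ j * σ k).trace = if j = k then 1 else 0)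
    (hspan : ∀ M : Matrix (Fin N) (Fin N) ℂ, M.IsHermitian → M.trace = 0 →
      M ∈ Submodule.span ℝ (Set.range σ))
    (V : Matrix (Fin N) (Fin N) ℂ) (hV : V * Vᴴ = Vᴴ * V)
    (AV : Matrix (Fin (N ^ 2 - 1)) (Fin (N ^ 2 - 1)) ℝ)
    (hAV : ∀ ℓ j, AV ℓ j = (Vᴴ * σ ℓ * V * σ j).trace.re -
      (1 / 2 : ℝ) * (Vᴴ * V * (σ ℓ * σ j + σ j * σ ℓ)).trace.re) :
    AV * AVᵀ = AVᵀ * AV := by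
  classical
  have hLmem : ∀ ℓ, ∃ c : Fin (N ^ 2 - 1) → ℝ, ∑ i, c i • σ i = BlochAux.L V (σ ℓ) := fun ℓ =>
    (Submodule.mem_span_range_iff_exists_fun ℝ).mp
      (hspan _ (BlochAux.L_herm V _ (hherm ℓ)) (BlochAux.L_trace V _))
  choose cL hcL using hLmem
  have hL'mem : ∀ ℓ, ∃ c : Fin (N ^ 2 - 1) → ℝ, ∑ i, c i • σ i = BlochAux.L' V (σ ℓ) := fun ℓ =>
    (Submodule.mem_span_range_iff_exists_fun ℝ).mp
      (hspan _ (BlochAux.L'_herm V _ (hherm ℓ)) (BlochAux.L'_trace V hV _))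
  choose cL' hcL' using hL'mem
  have hA1 : ∀ ℓ j, AV ℓ j = cL' ℓ j := by
    intro ℓ j
    rw [hAV, BlochAux.entry1 V σ ℓ j, ← hcL' ℓ, BlochAux.coeff_right σ honb]
    simp
  have hA2 : ∀ ℓ j, AV j ℓ = cL ℓ j := by
    intro ℓ j
    rw [hAV, BlochAux.entry2 V σ j ℓ, ← hcL ℓ, BlochAux.coeff_left σ honb]
    simp
  ext ℓ k
  rw [Matrix.mul_apply, Matrix.mul_apply]
  simp only [transpose_apply]
  have lhs : ∑ j, AV ℓ j * AV k j
      = ((BlochAux.L' V (σ ℓ)) * (BlochAux.L' V (σ k))).trace.re := by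
    rw [← hcL' ℓ, ← hcL' k, BlochAux.trace_prod σ honb, Complex.ofReal_re]
    exact Finset.sum_congr rfl fun j _ => by rw [hA1 ℓ j, hA1 k j]
  have rhs : ∑ j, AV j ℓ * AV j k
      = ((BlochAux.L V (σ ℓ)) * (BlochAux.L V (σ k))).trace.re := by
    rw [← hcL ℓ, ← hcL k, BlochAux.trace_prod σ honb, Complex.ofReal_re]
    exact Finset.sum_congr rfl fun j _ => by rw [hA2 ℓ j, hA2 k j]
  rw [lhs, rhs]
  congr 1
  rw [BlochAux.adj1, BlochAux.comm V hV, BlochAux.adj2]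
end

section
/- The matrix ρ_ss = (1/5)·[[2,−1,0],[−1,2,−1],[0,−1,1]] is a density matrix (Hermitian, positive semidefinite, trace 1) and satisfies D[V](ρ_ss) = 0 for V the upper-triangular 3×3 matrix of all ones, V = [[1,1,1],[0,1,1],[0,0,1]]. -/
open Matrix ComplexOrder

set_option maxHeartbeats 2000000 in
/-- `ρ_ss = (1/5)·[[2,−1,0],[−1,2,−1],[0,−1,1]]` is a density matrix and is a steady
state of the dissipator `D[V]` for the upper-triangular all-ones `V`. -/
theorem steady_state_example :
    let V : Matrix (Fin 3) (Fin 3) ℂ := !![1, 1, 1; 0, 1, 1; 0, 0, 1]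
    let ρ : Matrix (Fin 3) (Fin 3) ℂ :=
      (1 / 5 : ℂ) • !![2, -1, 0; -1, 2, -1; 0, -1, 1]
    ρ.PosSemidef ∧ ρ.trace = 1 ∧
      V * ρ * Vᴴ - (1 / 2 : ℂ) • (Vᴴ * V * ρ + ρ * (Vᴴ * V)) = 0 := by
  intro V ρ
  have hV : Vᴴ = !![1, 0, 0; 1, 1, 0; 1, 1, 1] := by
    ext i j
    fin_cases i <;> fin_cases j <;>
      simp [V, Matrix.conjTranspose_apply, Matrix.vecHead, Matrix.vecTail]
  refine ⟨?_, ?_, ?_⟩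
  · set C : Matrix (Fin 3) (Fin 3) ℂ := !![1, 0, 0; -1, 1, 0; 0, -1, 1] with hC
    have hA : (!![2, -1, 0; -1, 2, -1; 0, -1, 1] : Matrix (Fin 3) (Fin 3) ℂ) = Cᴴ * C := by
      ext i j
      fin_cases i <;> fin_cases j <;>
        simp [hC, Matrix.mul_apply, Fin.sum_univ_succ, Matrix.conjTranspose_apply] <;> norm_num
    have hc : ((Real.sqrt 5 : ℝ) : ℂ)⁻¹ * ((Real.sqrt 5 : ℝ) : ℂ)⁻¹ = 1 / 5 := by
      rw [← mul_inv, ← Complex.ofReal_mul, Real.mul_self_sqrt (by norm_num)]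
      norm_num
    have hρ : ρ = (((Real.sqrt 5 : ℝ) : ℂ)⁻¹ • C)ᴴ * (((Real.sqrt 5 : ℝ) : ℂ)⁻¹ • C) := by
      rw [Matrix.conjTranspose_smul, Matrix.smul_mul, Matrix.mul_smul, smul_smul]
      simp only [star_inv₀, Complex.star_def, Complex.conj_ofReal, hc]
      show ρ = (1 / 5 : ℂ) • (Cᴴ * C)
      rw [← hA]
    rw [show ρ.PosSemidef ↔ ((((Real.sqrt 5:ℝ):ℂ)⁻¹ • C)ᴴ * (((Real.sqrt 5:ℝ):ℂ)⁻¹ • C)).PosSemidef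
      from by rw [← hρ]]
    exact Matrix.posSemidef_conjTranspose_mul_self _
  · show ((1 / 5 : ℂ) • !![2, -1, 0; -1, 2, -1; 0, -1, 1] : Matrix (Fin 3) (Fin 3) ℂ).trace = 1
    simp [Matrix.trace_fin_three]
    ring
  · have hρe : ρ = !![2/5, -1/5, 0; -1/5, 2/5, -1/5; 0, -1/5, 1/5] := by
      ext i j
      fin_cases i <;> fin_cases j <;> simp [ρ] <;> norm_num
    rw [hρe, hV]
    show (!![1, 1, 1; 0, 1, 1; 0, 0, 1] : Matrix (Fin 3) (Fin 3) ℂ) *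
        !![2/5, -1/5, 0; -1/5, 2/5, -1/5; 0, -1/5, 1/5] * !![1, 0, 0; 1, 1, 0; 1, 1, 1] -
      (1 / 2 : ℂ) • (!![1, 0, 0; 1, 1, 0; 1, 1, 1] * !![1, 1, 1; 0, 1, 1; 0, 0, 1] *
          !![2/5, -1/5, 0; -1/5, 2/5, -1/5; 0, -1/5, 1/5] +
        !![2/5, -1/5, 0; -1/5, 2/5, -1/5; 0, -1/5, 1/5] *
          (!![1, 0, 0; 1, 1, 0; 1, 1, 1] * !![1, 1, 1; 0, 1, 1; 0, 0, 1])) = 0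
    ext i j
    fin_cases i <;> fin_cases j <;>
      simp [Matrix.mul_apply, Fin.sum_univ_succ] <;> ring
end
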